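/- Let (T, [···]) be a null symplectic triple system over a field of characteristic ≠ 2, 3. Then d_{x,x} d_{y,y} d_{x,x} = −d_{[xxy],[xxy]} for all x,y ∈ T. In particular, [[xxT][xxT]T] ⊆ [xxT] for every x ∈ T. -/

import Mathlib

/-- A null symplectic triple system: a trilinear product which is symmetric in its
arguments and such that the maps `d_{x,y} = [xy·]` are derivations of the product. -/
def IsNullSTS (k : Type*) {T : Type*} [Field k] [AddCommGroup T] [Module k T]
    (tp : T →ₗ[k] T →ₗ[k] T →ₗ[k] T) : Prop :=
  (∀ x y z : T, tp x y z = tp y x z) ∧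
  (∀ x y z : T, tp x y z = tp x z y) ∧
  (∀ x y u v w : T, tp x y (tp u v w) =
      tp (tp x y u) v w + tp u (tp x y v) w + tp u v (tp x y w))

/-- In a null symplectic triple system over a field of characteristic
`≠ 2, 3`, `d_{x,x} d_{y,y} d_{x,x} = -d_{[xxy],[xxy]}` for all `x, y`; in particular
`[[xxT][xxT]T] ⊆ [xxT]` for every `x`. -/
theorem nullSTS_dxx_dyy_dxx (k T : Type*) [Field k] [AddCommGroup T] [Module k T]
    [FiniteDimensional k T] (hchar2 : ringChar k ≠ 2) (hchar3 : ringChar k ≠ 3)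
    (tp : T →ₗ[k] T →ₗ[k] T →ₗ[k] T) (hnsts : IsNullSTS k tp) :
    (∀ x y : T, tp x x ∘ₗ tp y y ∘ₗ tp x x = -(tp (tp x x y) (tp x x y))) ∧
    (∀ x u v w : T, tp (tp x x u) (tp x x v) w ∈ LinearMap.range (tp x x)) := by
  obtain ⟨h1, h2, hd⟩ := hnsts
  have h2k : (2:k) ≠ 0 := Ring.two_ne_zero hchar2
  have h3k : (3:k) ≠ 0 := by
    intro h0
    have hdvd : ringChar k ∣ 3 := ringChar.dvd (by exact_mod_cast h0)
    rcases (Nat.prime_three).eq_one_or_self_of_dvd _ hdvd with hh | hh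
    · exact CharP.ringChar_ne_one hh
    · exact hchar3 hh
  have hsym3 : ∀ u v w : T, tp u v w = tp w u v := fun u v w => by rw [h2, h1]
  -- [[xxx] x z] = 0
  have hDx3 : ∀ x z : T, tp (tp x x x) x z = 0 := by
    intro x z
    have h := hd x x x x z
    rw [h1 x (tp x x x) z] at h
    have hAA : tp (tp x x x) x z + tp (tp x x x) x z = 0 := right_eq_add.mp h
    have := smul_eq_zero.mp (show (2:k) • tp (tp x x x) x z = 0 by
      rw [two_smul]; exact hAA)
    exact this.resolve_left h2k
  -- D_x² = 0
  have hDD : ∀ x z : T, tp x x (tp x x z) = 0 := by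
    intro x z
    have h := hd x z x x x
    rw [h2 x z x, hsym3 x z (tp x x x), hDx3,
        show tp (tp x x z) x x = tp x x (tp x x z) from (hsym3 x x _).symm,
        h2 x (tp x x z) x] at h
    have := smul_eq_zero.mp (show (3:k) • tp x x (tp x x z) = 0 by
      rw [show (3:k) = 2 + 1 by norm_num, add_smul, two_smul, one_smul]
      exact h.symm)
    exact this.resolve_left h3k
  -- key pointwise identity
  have key : ∀ x y z : T,
      tp x x (tp y y (tp x x z)) = -(tp (tp x x y) (tp x x y) z) := by
    intro x y z
    have F1 : tp x x (tp y y (tp x x z)) =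
        tp (tp x x y) y (tp x x z) + tp (tp x x y) y (tp x x z) := by
      have h := hd x x y y (tp x x z)
      rw [h1 y (tp x x y) (tp x x z), hDD x z, map_zero, add_zero] at h
      exact h
    have F2 : tp x x (tp (tp x x y) y z) =
        tp (tp x x y) (tp x x y) z + tp (tp x x y) y (tp x x z) := by
      have h := hd x x (tp x x y) y z
      rw [hDD x y] at h
      simpa using h
    have F3 : (0:T) = tp x x (tp (tp x x y) y z) + tp x x (tp (tp x x y) y z)
        + (tp (tp x x y) y (tp x x z) + tp (tp x x y) y (tp x x z)) := by
      have hG := congrArg (tp x x) (hd x x y y z)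
      simp only [map_add] at hG
      rw [hDD x (tp y y z), h1 y (tp x x y) z, F1] at hG
      exact hG
    rw [F2] at F3
    have huu : (tp (tp x x y) (tp x x y) z
        + (tp (tp x x y) y (tp x x z) + tp (tp x x y) y (tp x x z)))
        + (tp (tp x x y) (tp x x y) z
        + (tp (tp x x y) y (tp x x z) + tp (tp x x y) y (tp x x z))) = 0 := by
      rw [F3]; abel
    have hu := (smul_eq_zero.mp (show (2:k) • (tp (tp x x y) (tp x x y) z
        + (tp (tp x x y) y (tp x x z) + tp (tp x x y) y (tp x x z))) = 0 by
      rw [two_smul]; exact huu)).resolve_left h2k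
    rw [F1]
    refine eq_neg_of_add_eq_zero_left ?_
    rw [← hu]; abel
  constructor
  · intro x y
    ext z
    simp only [LinearMap.comp_apply, LinearMap.neg_apply]
    exact key x y z
  · intro x u v w
    rw [LinearMap.mem_range]
    refine ⟨(2:k)⁻¹ • (tp u u (tp x x w) + tp v v (tp x x w)
      - tp (u+v) (u+v) (tp x x w)), ?_⟩
    rw [map_smul, map_sub, map_add, key x u w, key x v w, key x (u+v) w,
        show tp x x (u+v) = tp x x u + tp x x v from map_add _ _ _]
    have hexp : tp (tp x x u + tp x x v) (tp x x u + tp x x v) w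
        = tp (tp x x u) (tp x x u) w + tp (tp x x u) (tp x x v) w
          + tp (tp x x u) (tp x x v) w + tp (tp x x v) (tp x x v) w := by
      simp only [map_add, LinearMap.add_apply]
      rw [h1 (tp x x v) (tp x x u) w]
      abel
    rw [hexp]
    rw [show -(tp (tp x x u) (tp x x u) w) + -(tp (tp x x v) (tp x x v) w)
        - -(tp (tp x x u) (tp x x u) w + tp (tp x x u) (tp x x v) w
          + tp (tp x x u) (tp x x v) w + tp (tp x x v) (tp x x v) w)
        = tp (tp x x u) (tp x x v) w + tp (tp x x u) (tp x x v) w from by abel,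
        ← two_smul k, smul_smul, inv_mul_cancel₀ h2k, one_smul]
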